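/- Let V be a ℚ-vector space with a nondegenerate symmetric (or skew-symmetric) bilinear form, G a group acting on V preserving the form, and suppose the G-action on V is generated by transvections of Picard–Lefschetz type: there is a family of vectors δ_i ∈ V, all conjugate under G, spanning V, with generators g_i of the action satisfying g_i(α) = α + ε⟨α, δ_i⟩δ_i for a fixed sign ε. Then the G-representation V is irreducible: any nonzero G-invariant subspace equals V. -/

import Mathlib

/-- A group `G` acting on a `ℚ`-vector space `V` with a nondegenerate
bilinear form, generated by Picard–Lefschetz transvections `g i : α ↦ α + ε⟨α,δ i⟩δ i`
along a family of vanishing cycles `δ i` which span `V` and are all conjugate up to sign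
under the action, acts irreducibly: any nonzero `G`-invariant subspace is all of `V`. -/
theorem stmt2 {G V ι : Type*} [Group G] [AddCommGroup V] [Module ℚ V]
    (ρ : Representation ℚ G V) (B : LinearMap.BilinForm ℚ V)
    (hpres : ∀ (g : G) (x y : V), B (ρ g x) (ρ g y) = B x y)
    (hnondeg : ∀ v : V, (∀ w : V, B v w = 0) → v = 0)
    (δ : ι → V) (hspan : Submodule.span ℚ (Set.range δ) = ⊤)
    (g : ι → G) (ε : ℤ) (hε : ε = 1 ∨ ε = -1)
    (hPL : ∀ (i : ι) (α : V), ρ (g i) α = α + ε • (B α (δ i)) • δ i)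
    (hgen : Subgroup.closure (Set.range g) = ⊤)
    (hconj : ∀ i j : ι, ∃ h : G, ρ h (δ i) = δ j ∨ ρ h (δ i) = -δ j) :
    ∀ W : Submodule ℚ V, (∀ (γ : G), ∀ w ∈ W, ρ γ w ∈ W) → W ≠ ⊥ → W = ⊤ := by
  intro W hinv hne
  obtain ⟨w, hwW, hw0⟩ := Submodule.exists_mem_ne_zero_of_ne_bot hne
  -- find i with B w (δ i) ≠ 0
  have hex : ∃ i, B w (δ i) ≠ 0 := by
    by_contra hcon
    push_neg at hcon
    apply hw0
    apply hnondeg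
    intro y
    have hy : y ∈ Submodule.span ℚ (Set.range δ) := by rw [hspan]; trivial
    induction hy using Submodule.span_induction with
    | mem x hx => obtain ⟨i, rfl⟩ := hx; exact hcon i
    | zero => simp
    | add x y _ _ hx hy => simp [hx, hy]
    | smul a x _ hx => simp [hx]
  obtain ⟨i, hi⟩ := hex
  -- δ i ∈ W
  have hδi : δ i ∈ W := by
    have h1 : ρ (g i) w - w ∈ W := Submodule.sub_mem W (hinv (g i) w hwW) hwW
    have h2 : ρ (g i) w - w = ((ε : ℚ) * B w (δ i)) • δ i := by
      rw [hPL i w]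
      rw [mul_smul]
      simp [← Int.cast_smul_eq_zsmul ℚ]
    rw [h2] at h1
    have hc : (ε : ℚ) * B w (δ i) ≠ 0 := by
      apply mul_ne_zero _ hi
      rcases hε with h | h <;> simp [h]
    have := Submodule.smul_mem W ((ε : ℚ) * B w (δ i))⁻¹ h1
    rwa [smul_smul, inv_mul_cancel₀ hc, one_smul] at this
  -- all δ j ∈ W
  have hδ : ∀ j, δ j ∈ W := by
    intro j
    obtain ⟨h, hh | hh⟩ := hconj i j
    · rw [← hh]; exact hinv h (δ i) hδi
    · have := hinv h (δ i) hδi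
      rw [hh] at this
      simpa using Submodule.neg_mem W this
  rw [eq_top_iff, ← hspan, Submodule.span_le]
  rintro _ ⟨j, rfl⟩
  exact hδ j
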